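/- arXiv:2009.10575 — 2 statements merged into one kernel-verified Lean document; each statement's English description precedes it below -/
import Mathlib

section
/- Suppose a group G has a finite index subgroup H and an element h ∈ H of infinite order which is central in G. If there exists a group homomorphism θ : H → ℤ with θ(h) ≠ 0, then there exists a group homomorphism φ : G → ℤ with φ(h) ≠ 0. -/
/-- If a group `G` has a finite index subgroup `H` and an element `h ∈ H` of infinite
order which is central in `G`, and there is a homomorphism `θ : H → ℤ` with `θ h ≠ 0`,
then there is a homomorphism `φ : G → ℤ` with `φ h ≠ 0`. -/
theorem stmt0 {G : Type*} [Group G] (H : Subgroup G) [H.FiniteIndex]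
    (h : G) (hhH : h ∈ H) (hord : ¬ IsOfFinOrder h) (hcen : h ∈ Subgroup.center G)
    (θ : H →* Multiplicative ℤ) (hθ : θ ⟨h, hhH⟩ ≠ 1) :
    ∃ φ : G →* Multiplicative ℤ, φ h ≠ 1 := by
  refine ⟨MonoidHom.transfer θ, ?_⟩
  have key : ∀ (k : ℕ) (g₀ : G), g₀⁻¹ * h ^ k * g₀ ∈ H → g₀⁻¹ * h ^ k * g₀ = h ^ k := by
    intro k g₀ _
    have hz : h ^ k ∈ Subgroup.center G := Subgroup.pow_mem _ hcen k
    rw [Subgroup.mem_center_iff.mp hz g₀⁻¹, mul_assoc, inv_mul_cancel, mul_one]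
  rw [MonoidHom.transfer_eq_pow θ h key]
  intro hc'
  apply hθ
  have hc : (θ ⟨h, hhH⟩) ^ H.index = 1 := by
    rw [← map_pow]
    convert hc' using 2
    exact Subtype.ext (by simp)
  have hn : H.index ≠ 0 := Subgroup.FiniteIndex.index_ne_zero
  have h2 : (H.index : ℤ) * Multiplicative.toAdd (θ ⟨h, hhH⟩) = 0 := by
    have := congrArg Multiplicative.toAdd hc
    simpa [toAdd_pow, mul_comm] using this
  have h3 : Multiplicative.toAdd (θ ⟨h, hhH⟩) = 0 := by
    rcases mul_eq_zero.mp h2 with h' | h'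
    · exact absurd (by exact_mod_cast h') hn
    · exact h'
  have := congrArg Multiplicative.ofAdd h3
  simpa using this
end

section
/- Suppose a group G has a finite index subgroup H and an element h ∈ H of infinite order which is central in G. If the image of h in the abelianisation H/[H,H] has infinite order, then the image of h in the abelianisation G/[G,G] has infinite order. -/
/-- If a group `G` has a finite index subgroup `H` and an infinite order element `h ∈ H`
which is central in `G`, and the image of `h` in the abelianisation of `H` has infinite
order, then the image of `h` in the abelianisation of `G` has infinite order. -/
theorem stmt1 {G : Type*} [Group G] (H : Subgroup G) [H.FiniteIndex]
    (h : G) (hhH : h ∈ H) (hord : ¬ IsOfFinOrder h) (hcen : h ∈ Subgroup.center G)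
    (hab : ¬ IsOfFinOrder (Abelianization.of (⟨h, hhH⟩ : H))) :
    ¬ IsOfFinOrder (Abelianization.of h) := by
  intro hfin
  set φ : H →* Abelianization H := Abelianization.of
  have key : ∀ (k : ℕ) (g₀ : G), g₀⁻¹ * h ^ k * g₀ ∈ H → g₀⁻¹ * h ^ k * g₀ = h ^ k := by
    intro k g₀ _
    have : h ^ k ∈ Subgroup.center G := Subgroup.pow_mem _ hcen k
    rw [Subgroup.mem_center_iff] at this
    rw [mul_assoc, ← this g₀, ← mul_assoc, inv_mul_cancel, one_mul]
  have ht : MonoidHom.transfer φ h = φ ⟨h ^ H.index, MonoidHom.transfer_eq_pow_aux h key⟩ :=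
    MonoidHom.transfer_eq_pow φ h key
  -- the transfer factors through the abelianization of G
  have hfin2 : IsOfFinOrder ((Abelianization.lift (MonoidHom.transfer φ)) (Abelianization.of h)) :=
    (Abelianization.lift (MonoidHom.transfer φ)).isOfFinOrder hfin
  rw [Abelianization.lift_apply_of, ht] at hfin2
  have : (⟨h ^ H.index, MonoidHom.transfer_eq_pow_aux h key⟩ : H)
      = (⟨h, hhH⟩ : H) ^ H.index := by
    ext; simp
  rw [this, map_pow] at hfin2
  exact hab (hfin2.of_pow Subgroup.FiniteIndex.index_ne_zero)
end
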